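/- Let n ≥ 3 and let α_i = e_i − e_{i+1} be any simple root of A_{n−1} (1 ≤ i ≤ n−1). Then there is no permutation w ∈ S_n such that w·(−2α_i) = w(−2α_i + ρ) − ρ is dominant. -/

import Mathlib

/-- ρ = (n−1, n−2, …, 1, 0) for type A_{n−1} realized in ℤ^n. -/
def weylRho (n : ℕ) : Fin n → ℤ := fun i => (n : ℤ) - 1 - (i : ℕ)

/-- The action of `w ∈ S_n` on weights: `w(λ)_i = λ_{w⁻¹(i)}`. -/
def wAct {n : ℕ} (w : Equiv.Perm (Fin n)) (lam : Fin n → ℤ) : Fin n → ℤ :=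
  fun i => lam (w⁻¹ i)

/-- The dot action `w·λ = w(λ+ρ) − ρ`. -/
def dotAct {n : ℕ} (w : Equiv.Perm (Fin n)) (lam : Fin n → ℤ) : Fin n → ℤ :=
  fun i => lam (w⁻¹ i) + weylRho n (w⁻¹ i) - weylRho n i

/-- `λ` is dominant iff `λ_1 ≥ λ_2 ≥ ⋯ ≥ λ_n`. -/
def IsDominant {n : ℕ} (lam : Fin n → ℤ) : Prop :=
  ∀ i j : Fin n, i ≤ j → lam j ≤ lam i

/-- The root `e_i − e_j`. -/
def posRoot {n : ℕ} (i j : Fin n) : Fin n → ℤ :=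
  fun k => (if k = i then 1 else 0) - (if k = j then 1 else 0)

/-- Positive roots of A_{n−1}: `e_i − e_j` with `i < j`. -/
def IsPosRoot {n : ℕ} (x : Fin n → ℤ) : Prop :=
  ∃ i j : Fin n, i < j ∧ x = posRoot i j

/-- Negative roots of A_{n−1}. -/
def IsNegRoot {n : ℕ} (x : Fin n → ℤ) : Prop :=
  ∃ i j : Fin n, i < j ∧ x = -(posRoot i j)

/-- The length ℓ(w): the number of positive roots sent to negative roots by `w`,
i.e. the number of inversions of `w`. -/
def weylLen {n : ℕ} (w : Equiv.Perm (Fin n)) : ℕ :=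
  (Finset.univ.filter (fun p : Fin n × Fin n => p.1 < p.2 ∧ w p.2 < w p.1)).card

/-- For n ≥ 3 and a simple root α_i of A_{n−1}, no w ∈ S_n makes w·(−2α_i) dominant. -/
theorem no_dominant_dot_neg_two_simple (n : ℕ) (hn : 3 ≤ n) (i : ℕ) (hi : i + 1 < n) :
    ¬ ∃ w : Equiv.Perm (Fin n),
        IsDominant (dotAct w (-(2 • posRoot (⟨i, by omega⟩ : Fin n) (⟨i + 1, hi⟩ : Fin n)))) := by
  rintro ⟨w, hdom⟩
  set lam : Fin n → ℤ :=
    -(2 • posRoot (⟨i, by omega⟩ : Fin n) (⟨i + 1, hi⟩ : Fin n)) with hlam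
  -- the entries of lam + ρ are pairwise distinct
  have key : ∀ j k : Fin n, j ≠ k →
      lam j + weylRho n j ≠ lam k + weylRho n k := by
    have main : ∀ j k : Fin n, w j < w k →
        lam k + weylRho n k < lam j + weylRho n j := by
      intro j k h
      have hd := hdom (w j) (w k) h.le
      simp only [dotAct, Equiv.Perm.inv_def, Equiv.symm_apply_apply] at hd
      have hr : weylRho n (w k) + 1 ≤ weylRho n (w j) := by
        have : (w j : ℕ) < (w k : ℕ) := h
        simp only [weylRho]
        omega
      omega
    intro j k hjk
    have hwjk : w j ≠ w k := fun h => hjk (w.injective h)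
    rcases lt_or_gt_of_ne hwjk with h | h
    · exact (main j k h).ne'
    · exact (main k j h).ne
  have hlamval : ∀ k : Fin n, lam k =
      -2 * ((if (k : ℕ) = i then 1 else 0) - (if (k : ℕ) = i + 1 then 1 else 0)) := by
    intro k
    simp only [hlam, posRoot, Pi.neg_apply, Pi.smul_apply, smul_eq_mul, Fin.ext_iff]
    ring
  rcases Nat.eq_zero_or_pos i with hi0 | hi1
  · -- i = 0 : entries at positions i and i+2 coincide
    have h02 : i + 2 < n := by omega
    have hkey := key ⟨i, by omega⟩ ⟨i + 2, h02⟩ (by simp [Fin.ext_iff])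
    have l1 : lam ⟨i, by omega⟩ = -2 := by
      rw [hlamval]; simp only [Fin.val_mk]; split_ifs <;> omega
    have l2 : lam ⟨i + 2, h02⟩ = 0 := by
      rw [hlamval]; simp only [Fin.val_mk]; split_ifs <;> omega
    rw [l1, l2] at hkey
    simp only [weylRho, Fin.val_mk] at hkey
    omega
  · -- i ≥ 1 : entries at positions i+1 and i−1 coincide
    have hm : i - 1 < n := by omega
    have hkey := key ⟨i + 1, hi⟩ ⟨i - 1, hm⟩ (by rw [Ne, Fin.ext_iff]; simp only [Fin.val_mk]; omega)
    have l1 : lam ⟨i + 1, hi⟩ = 2 := by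
      rw [hlamval]; simp only [Fin.val_mk]; split_ifs <;> omega
    have l2 : lam ⟨i - 1, hm⟩ = 0 := by
      rw [hlamval]; simp only [Fin.val_mk]; split_ifs <;> omega
    rw [l1, l2] at hkey
    simp only [weylRho, Fin.val_mk] at hkey
    omega
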